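/- Let (X,d) be a compact metric space, f : X → X a continuous map, μ an ergodic f-invariant Borel probability measure on X, and X_1,…,X_q compact subsets of X. Suppose f(X_i) ⊂ X_i for 1 ≤ i ≤ q and Ω(f) = ⋃_{i=1}^q X_i, where Ω(f) is the non-wandering set of f. Then there exists an integer 1 ≤ i ≤ q such that μ(X_i) = 1. -/

import Mathlib

open MeasureTheory Filter Topology Set
open scoped ENNReal NNReal

attribute [local instance] Classical.propDecidable

noncomputable section

namespace OneWaySpec

/-! ### Empirical measures and the level-2 large deviation principle -/

/-- The empirical measure `(1/n) ∑_{j<n} δ_{f^j x}` (as a plain measure). -/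
noncomputable def empMeas {Y : Type*} [MeasurableSpace Y] (f : Y → Y) (x : Y) (n : ℕ) :
    Measure Y :=
  (n : ℝ≥0∞)⁻¹ • ∑ j ∈ Finset.range n, Measure.dirac (f^[j] x)

lemma empMeas_isProbabilityMeasure {Y : Type*} [MeasurableSpace Y] (f : Y → Y) (x : Y)
    {n : ℕ} (hn : n ≠ 0) : IsProbabilityMeasure (empMeas f x n) := by
  constructor
  rw [empMeas, Measure.smul_apply, Measure.finset_sum_apply]
  simp only [measure_univ, Finset.sum_const, Finset.card_range, nsmul_eq_mul, mul_one]
  exact ENNReal.inv_mul_cancel (by exact_mod_cast hn) (ENNReal.natCast_ne_top n)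

/-- The empirical measure `E_n(x) = (1/n) ∑_{j<n} δ_{f^j x}` as a probability measure
(junk value `δ_x` for `n = 0`). -/
noncomputable def empPM {Y : Type*} [MeasurableSpace Y] (f : Y → Y) (x : Y) (n : ℕ) :
    ProbabilityMeasure Y :=
  if hn : n = 0 then ⟨Measure.dirac x, inferInstance⟩
  else ⟨empMeas f x n, empMeas_isProbabilityMeasure f x hn⟩

/-- `(X,f)` satisfies a level-2 large deviation principle with reference measure `m`
and rate function `q`. -/
def LevelTwoLDP {Y : Type*} [MeasurableSpace Y] [TopologicalSpace Y] [OpensMeasurableSpace Y]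
    (f : Y → Y) (m : Measure Y) (q : ProbabilityMeasure Y → EReal) : Prop :=
  UpperSemicontinuous q ∧ (∀ μ, q μ ≤ 0) ∧
  (∀ G : Set (ProbabilityMeasure Y), IsOpen G →
    ⨆ μ ∈ G, q μ ≤ atTop.liminf fun n : ℕ =>
      (((n : ℝ)⁻¹ : ℝ) : EReal) * ENNReal.log (m {x | empPM f x n ∈ G})) ∧
  (∀ F : Set (ProbabilityMeasure Y), IsClosed F →
    (atTop.limsup fun n : ℕ =>
      (((n : ℝ)⁻¹ : ℝ) : EReal) * ENNReal.log (m {x | empPM f x n ∈ F})) ≤ ⨆ μ ∈ F, q μ)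

/-! ### Measure-theoretic (Kolmogorov–Sinai) entropy and free energy -/

/-- Shannon entropy of the finite partition of `Y` induced by `P : Y → ι`. -/
noncomputable def partEnt {Y : Type*} [MeasurableSpace Y] (μ : Measure Y)
    {ι : Type*} [Fintype ι] (P : Y → ι) : ℝ :=
  ∑ a : ι, Real.negMulLog ((μ (P ⁻¹' {a})).toReal)

/-- Kolmogorov–Sinai entropy of `μ` for `f` : the supremum over finite measurable partitions
`P` of the limit of `(1/n) H_μ(⋁_{j<n} f^{-j} P)`. -/
noncomputable def ksEntropy {Y : Type*} [MeasurableSpace Y] (f : Y → Y) (μ : Measure Y) :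
    EReal :=
  ⨆ (k : ℕ) (P : Y → Fin k) (_ : ∀ a, MeasurableSet (P ⁻¹' {a})),
    atTop.limsup fun n : ℕ =>
      ((((n : ℝ)⁻¹ * partEnt μ fun x => fun j : Fin n => P (f^[j] x)) : ℝ) : EReal)

/-- The free energy `F_φ(μ) = h(μ) - ∫ φ dμ` for `f`-invariant `μ`, and `-∞` otherwise. -/
noncomputable def freeEnergy {Y : Type*} [MeasurableSpace Y] (f : Y → Y) (φ : Y → ℝ)
    (μ : ProbabilityMeasure Y) : EReal :=
  if (μ : Measure Y).map f = (μ : Measure Y) then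
    ksEntropy f (μ : Measure Y) - (((∫ x, φ x ∂(μ : Measure Y)) : ℝ) : EReal)
  else ⊥

/-! ### Non-wandering sets, Bowen balls and the one-way specification properties -/

/-- The non-wandering set of the restriction of `f` to `X` (relative neighborhoods). -/
def nonWanderingIn {Y : Type*} [TopologicalSpace Y] (f : Y → Y) (X : Set Y) : Set Y :=
  {x ∈ X | ∀ U ∈ nhds x, ∃ n > 0, ∃ y ∈ U ∩ X, f^[n] y ∈ U ∩ X}

/-- Bowen ball `B_n(x,ε)`. -/
def bowenBall {Y : Type*} [PseudoMetricSpace Y] (f : Y → Y) (n : ℕ) (x : Y) (ε : ℝ) :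
    Set Y :=
  {y | ∀ j < n, dist (f^[j] x) (f^[j] y) ≤ ε}

/-- `∑_{t<j} (n_t + M_t)`. -/
def gapSum {k : ℕ} (n M : Fin k → ℕ) (j : Fin k) : ℕ :=
  ∑ t ∈ Finset.Iio j, (n t + M t)

/-- One-way specification property of `f` on `X` with the family of sets `Xs`,
with respect to the distance function `d`. -/
def OneWaySpecWithOn {Y : Type*} [TopologicalSpace Y] (d : Y → Y → ℝ) (f : Y → Y)
    (X : Set Y) {q : ℕ} (Xs : Fin q → Set Y) : Prop :=
  (∀ i, Xs i ⊆ X) ∧ (∀ i, IsCompact (Xs i)) ∧ (∀ i, f '' Xs i ⊆ Xs i) ∧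
  nonWanderingIn f X = (⋃ i, Xs i) ∧
  ∀ ε > (0:ℝ), ∃ M : ℕ, ∀ (k : ℕ) (idx : Fin k → Fin q), Monotone idx →
    ∀ x : Fin k → Y, (∀ j, x j ∈ Xs (idx j)) →
    ∀ n : Fin k → ℕ, (∀ j, 1 ≤ n j) →
    ∃ y ∈ X, ∀ (j : Fin k), ∀ i < n j,
      d (f^[i] (x j)) (f^[i + gapSum n (fun _ => M) j] y) ≤ ε

/-- One-way (W)-specification property of `f` on `X` with the family of sets `Xs`,
with respect to the distance function `d`. -/
def OneWayWSpecWithOn {Y : Type*} [TopologicalSpace Y] (d : Y → Y → ℝ) (f : Y → Y)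
    (X : Set Y) {q : ℕ} (Xs : Fin q → Set Y) : Prop :=
  (∀ i, Xs i ⊆ X) ∧ (∀ i, IsCompact (Xs i)) ∧ (∀ i, f '' Xs i ⊆ Xs i) ∧
  nonWanderingIn f X = (⋃ i, Xs i) ∧
  ∀ ε > (0:ℝ), ∃ M : ℕ, ∀ (k : ℕ) (idx : Fin k → Fin q), Monotone idx →
    ∀ x : Fin k → Y, (∀ j, x j ∈ Xs (idx j)) →
    ∀ n : Fin k → ℕ, (∀ j, 1 ≤ n j) →
    ∃ y ∈ X, ∃ Ms : Fin k → ℕ, (∀ t, Ms t ≤ M) ∧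
      ∀ (j : Fin k), ∀ i < n j,
        d (f^[i] (x j)) (f^[i + gapSum n Ms j] y) ≤ ε

/-- One-way specification property of `f` on `X`. -/
def OneWaySpecOn {Y : Type*} [TopologicalSpace Y] (d : Y → Y → ℝ) (f : Y → Y)
    (X : Set Y) : Prop :=
  ∃ (q : ℕ) (Xs : Fin q → Set Y), OneWaySpecWithOn d f X Xs

/-- One-way (W)-specification property of `f` on `X`. -/
def OneWayWSpecOn {Y : Type*} [TopologicalSpace Y] (d : Y → Y → ℝ) (f : Y → Y)
    (X : Set Y) : Prop :=
  ∃ (q : ℕ) (Xs : Fin q → Set Y), OneWayWSpecWithOn d f X Xs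

/-! ### Symbolic dynamics -/

/-- The one-sided shift map. -/
def shift {A : Type*} : (ℕ → A) → (ℕ → A) := fun ω n => ω (n + 1)

/-- The standard metric `d(ω,ω') = 2^{-min{k : ω_k ≠ ω'_k}}` on sequence spaces. -/
noncomputable def seqDist {A : Type*} [DecidableEq A] (x y : ℕ → A) : ℝ :=
  if h : x = y then 0 else (2 : ℝ)⁻¹ ^ Nat.find (Function.ne_iff.mp h)

/-- The (ambient) cylinder set of a finite word `w`. -/
def cylO {A : Type*} (w : List A) : Set (ℕ → A) :=
  {ω | ∀ (k : ℕ) (h : k < w.length), ω k = w.get ⟨k, h⟩}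

/-- `w` belongs to the language of the subshift `X`. -/
def InLang {A : Type*} (X : Set (ℕ → A)) (w : List A) : Prop :=
  (X ∩ cylO w).Nonempty

/-- The concatenation `w_0 v_0 w_1 v_1 ⋯ v_{k-2} w_{k-1}`. -/
def joinWords {A : Type*} {k : ℕ} (w v : Fin k → List A) : List A :=
  (List.ofFn fun j : Fin k => if (j : ℕ) = k - 1 then w j else w j ++ v j).flatten

end OneWaySpec
namespace OneWaySpec

/-! ### The `(-β)`-transformation -/

/-- `b = max{k ∈ ℤ : k < β}` for `β > 1`. -/
noncomputable def bOf (β : ℝ) : ℕ := ⌈β⌉₊ - 1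

/-- The map `x ↦ -βx + ⌊βx⌋ + 1`, which agrees with the `(-β)`-transformation away from
the branch points `{0, 1/β, …, b/β, 1}`. -/
noncomputable def Tpre (β : ℝ) (x : ℝ) : ℝ := -(β * x) + ⌊β * x⌋ + 1

/-- Symbol of `x`: the `i` with `x ∈ I_i = (i/β, (i+1)/β)` (junk at branch points). -/
noncomputable def symI (β : ℝ) (x : ℝ) : ℕ := (⌊β * x⌋).toNat

/-- The branch-point set `{0, 1/β, …, b/β, 1}`. -/
def bdry (β : ℝ) : Set ℝ := {y | ∃ i : ℕ, i ≤ bOf β ∧ y = (i : ℝ) / β} ∪ {1}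

/-- Points of `[0,1]` whose orbit never meets the branch points. -/
def goodPre (β : ℝ) : Set ℝ := {x ∈ Set.Icc (0:ℝ) 1 | ∀ k : ℕ, (Tpre β)^[k] x ∉ bdry β}

/-- Itinerary of a good point. -/
noncomputable def itinPre (β : ℝ) (x : ℝ) : ℕ → ℕ := fun k => symI β ((Tpre β)^[k] x)

/-- `i'(1)`, the coordinatewise limit of the itineraries `i'(x)` of good points as `x → 1⁻`. -/
noncomputable def itinOne (β : ℝ) : ℕ → ℕ := fun k =>
  limUnder (nhdsWithin 1 (Set.Iio 1) ⊓ Filter.principal (goodPre β))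
    (fun x => itinPre β x k)

/-- `i'(1)` is of the form `(w0)^∞`. -/
def CaseOne (β : ℝ) : Prop :=
  ∃ p : ℕ, 1 ≤ p ∧ (∀ k, itinOne β (k + p) = itinOne β k) ∧ itinOne β (p - 1) = 0

/-- The `(-β)`-transformation `T_{-β} : [0,1] → [0,1]` (as a map of `ℝ`). -/
noncomputable def negBeta (β : ℝ) (x : ℝ) : ℝ :=
  if x = 1 then -β + bOf β + 1
  else if ∃ i : ℕ, 1 ≤ i ∧ i ≤ bOf β ∧ x = (i : ℝ) / β then (if CaseOne β then 0 else 1)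
  else Tpre β x

/-- Points of `[0,1]` whose `T_{-β}`-orbit never meets the branch points. -/
def goodSet (β : ℝ) : Set ℝ := {x ∈ Set.Icc (0:ℝ) 1 | ∀ k : ℕ, (negBeta β)^[k] x ∉ bdry β}

/-- The itinerary `i'(x)` of a point under `T_{-β}`. -/
noncomputable def itin (β : ℝ) (x : ℝ) : ℕ → ℕ := fun k => symI β ((negBeta β)^[k] x)

/-- The symbolic space `Σ_{-β}` of the `(-β)`-transformation. -/
def SigmaNegBeta (β : ℝ) : Set (ℕ → ℕ) := closure (itin β '' goodSet β)

/-- The strict alternating order on sequences. -/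
def altLt (x y : ℕ → ℕ) : Prop :=
  ∃ n : ℕ, (∀ k < n, x k = y k) ∧ (if Even n then y n < x n else x n < y n)

/-- The alternating order on sequences. -/
def altLe (x y : ℕ → ℕ) : Prop := altLt x y ∨ x = y

/-- `β` is a Yrrap number: the orbit of `1` under `T_{-β}` is eventually periodic,
i.e. `i'(1)` is eventually periodic. -/
def Yrrap (β : ℝ) : Prop :=
  ∃ u v : ℕ, 1 ≤ v ∧ ∀ k, u ≤ k → itinOne β (k + v) = itinOne β k

/-- Symbol of `x` for the half-open partition `{J_0, …, J_b}`. -/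
noncomputable def symJ (β : ℝ) (x : ℝ) : ℕ :=
  if CaseOne β then (if x ≤ 1 / β then 0 else (⌈β * x⌉).toNat - 1)
  else (if x = 1 then bOf β else (⌊β * x⌋).toNat)

/-- The coding map `Φ : [0,1] → Σ_{-β}`, `(Φ x)_k = j ↔ T_{-β}^k x ∈ J_j`. -/
noncomputable def PhiMap (β : ℝ) (x : ℝ) : ℕ → ℕ := fun k => symJ β ((negBeta β)^[k] x)

/-- `L_{-β} = L ∘ Φ^{-1}`, as a set function. -/
noncomputable def LnegBeta (β : ℝ) (s : Set (ℕ → ℕ)) : ℝ≥0∞ :=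
  volume (Set.Icc (0:ℝ) 1 ∩ PhiMap β ⁻¹' s)

/-- The `(-β)`-transformation as a self-map of `[0,1]`. -/
noncomputable def negBetaI (β : ℝ) (x : Set.Icc (0:ℝ) 1) : Set.Icc (0:ℝ) 1 :=
  Set.projIcc 0 1 zero_le_one (negBeta β x)

/-- Lebesgue measure on `[0,1]`. -/
noncomputable def lebIcc : Measure (Set.Icc (0:ℝ) 1) :=
  volume.comap Subtype.val

/-! ### Piecewise expanding interval maps and their symbolic spaces -/

/-- Symbol of `x ∈ I_j = (a_j, a_{j+1})`. -/
noncomputable def symA {p : ℕ} (a : Fin (p + 1) → ℝ) (x : ℝ) : ℕ :=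
  (Finset.univ.filter fun i => a i < x).card - 1

/-- Points of `[0,1]` whose orbit never meets the branch points `S = {a_0,…,a_p}`. -/
def goodA {p : ℕ} (a : Fin (p + 1) → ℝ) (f : ℝ → ℝ) : Set ℝ :=
  {x ∈ Set.Icc (0:ℝ) 1 | ∀ (k : ℕ) (i : Fin (p + 1)), f^[k] x ≠ a i}

/-- The itinerary of a point. -/
noncomputable def itinA {p : ℕ} (a : Fin (p + 1) → ℝ) (f : ℝ → ℝ) (x : ℝ) : ℕ → ℕ :=
  fun k => symA a (f^[k] x)

/-- The symbolic space `Σ_f` of a piecewise expanding interval map. -/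
def SigmaA {p : ℕ} (a : Fin (p + 1) → ℝ) (f : ℝ → ℝ) : Set (ℕ → ℕ) :=
  closure (itinA a f '' goodA a f)

/-! ### A metric for the weak topology on measures -/

/-- The metric `D(μ,ν) = ∑_{k≥1} |∫φ_k dμ - ∫φ_k dν| / (2^{k+1}‖φ_k‖)` (indexed from `0`). -/
noncomputable def Dmeas {Y : Type*} [MeasurableSpace Y] [TopologicalSpace Y] [CompactSpace Y]
    (φs : ℕ → C(Y, ℝ)) (μ ν : Measure Y) : ℝ :=
  ∑' k : ℕ, |(∫ x, φs k x ∂μ) - ∫ x, φs k x ∂ν| / (2 ^ (k + 2) * ‖φs k‖)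

end OneWaySpec
namespace OneWaySpec

/-! ### Further auxiliary definitions -/

/-- The restriction of the shift to a shift-invariant subset. -/
def shiftRes {A : Type*} (X : Set (ℕ → A)) (h : ∀ ω ∈ X, shift ω ∈ X) : X → X :=
  fun ω => ⟨shift ω.1, h ω.1 ω.2⟩

/-- The prefix `s_0 s_1 ⋯ s_{m-1}` of a sequence. -/
def pref (s : ℕ → ℕ) (m : ℕ) : List ℕ := (List.range m).map s

/-- The five-branch piecewise linear map of Example 3.1. -/
noncomputable def exMap (x : ℝ) : ℝ :=
  if x < 1 / 6 then 3 * x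
  else if x < 1 / 2 then 3 * x - 1 / 2
  else if x < 2 / 3 then 3 * x - 1
  else if x < 5 / 6 then 3 * x - 3 / 2
  else 3 * x - 2

/-- The branch points of `exMap`. -/
noncomputable def a6 : Fin 6 → ℝ := ![0, 1 / 6, 1 / 2, 2 / 3, 5 / 6, 1]

/-- `exMap` as a self-map of `[0,1]`. -/
noncomputable def exMapI (x : Set.Icc (0:ℝ) 1) : Set.Icc (0:ℝ) 1 :=
  Set.projIcc 0 1 zero_le_one (exMap x)

/-- `sin (2πθ)` as a function on the circle `ℝ/ℤ`. -/
noncomputable def sinC : AddCircle (1:ℝ) → ℝ :=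
  Function.Periodic.lift (f := fun t : ℝ => Real.sin (2 * Real.pi * t)) (c := 1)
    (fun x => by
      simp only
      rw [show 2 * Real.pi * (x + 1) = 2 * Real.pi * x + 2 * Real.pi by ring,
        Real.sin_add_two_pi])

/-- `cos (2πθ)` as a function on the circle `ℝ/ℤ`. -/
noncomputable def cosC : AddCircle (1:ℝ) → ℝ :=
  Function.Periodic.lift (f := fun t : ℝ => Real.cos (2 * Real.pi * t)) (c := 1)
    (fun x => by
      simp only
      rw [show 2 * Real.pi * (x + 1) = 2 * Real.pi * x + 2 * Real.pi by ring,
        Real.cos_add_two_pi])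

/-- The circle map `f(θ) = θ + (1/10) sin (2πθ)` of Example 3.2. -/
noncomputable def circleF (θ : AddCircle (1:ℝ)) : AddCircle (1:ℝ) :=
  θ + ((1 / 10 * sinC θ : ℝ) : AddCircle (1:ℝ))

/-- The potential `φ = max{log f', 0}` for the circle map, `f'(θ) = 1 + (π/5) cos (2πθ)`. -/
noncomputable def circlePhi (θ : AddCircle (1:ℝ)) : ℝ :=
  max (Real.log (1 + Real.pi / 5 * cosC θ)) 0

/-- `g_β(w)`: the minimal `i ≥ 0` such that there are a word `v` of length `i` and symbols
`0 ≤ c < d ≤ b` with `wvc, wvd` in the language of `Σ_{-β}`. -/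
noncomputable def gbw (β : ℝ) (w : List ℕ) : ℕ :=
  sInf {i : ℕ | ∃ v : List ℕ, v.length = i ∧ ∃ c d : ℕ, c < d ∧ d ≤ bOf β ∧
    InLang (SigmaNegBeta β) (w ++ v ++ [c]) ∧ InLang (SigmaNegBeta β) (w ++ v ++ [d])}

/-- `g_β(n) = sup { g_β(w) : w in the language of `Σ_{-β}`, |w| = n }`. -/
noncomputable def gbn (β : ℝ) (n : ℕ) : ℕ :=
  sSup {m : ℕ | ∃ w : List ℕ, w.length = n ∧ InLang (SigmaNegBeta β) w ∧ m = gbw β w}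

end OneWaySpec
open OneWaySpec in
/-- **Lemma 2.3.** If `f(Xᵢ) ⊆ Xᵢ` for compact sets `X₁,…,X_q` whose union is the
non-wandering set `Ω(f)`, then every ergodic `f`-invariant measure gives full measure to
some `Xᵢ`. -/
theorem ergodic_full_measure_on_piece
    {X : Type*} [MetricSpace X] [CompactSpace X] [MeasurableSpace X] [BorelSpace X]
    (f : X → X) (hf : Continuous f)
    (μ : Measure X) [IsProbabilityMeasure μ] (hμ : Ergodic f μ)
    (q : ℕ) (Xs : Fin q → Set X)
    (hcomp : ∀ i, IsCompact (Xs i))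
    (hinv : ∀ i, f '' Xs i ⊆ Xs i)
    (hΩ : nonWanderingIn f Set.univ = ⋃ i, Xs i) :
    ∃ i : Fin q, μ (Xs i) = 1 := by
  have hmp : MeasurePreserving f μ μ := hμ.toMeasurePreserving
  -- a.e. point is non-wandering
  have hae : ∀ᵐ x ∂μ, x ∈ nonWanderingIn f Set.univ := by
    filter_upwards [hmp.conservative.ae_frequently_mem_of_mem_nhds] with x hx
    refine ⟨mem_univ x, fun U hU => ?_⟩
    obtain ⟨n, hnU, hn1⟩ := ((hx U hU).and_eventually (eventually_ge_atTop 1)).exists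
    exact ⟨n, hn1, x, ⟨mem_of_mem_nhds hU, mem_univ x⟩, hnU, mem_univ _⟩
  have hae2 : ∀ᵐ x ∂μ, x ∈ ⋃ i, Xs i := hΩ ▸ hae
  have hmU : MeasurableSet (⋃ i, Xs i) :=
    MeasurableSet.iUnion fun i => (hcomp i).isClosed.measurableSet
  have hu : μ (⋃ i, Xs i) = 1 := by
    refine (prob_compl_eq_zero_iff hmU).mp ?_
    simpa [ae_iff, Set.compl_def] using hae2
  -- each Xs i has measure 0 or 1
  have h01 : ∀ i, μ (Xs i) = 0 ∨ μ (Xs i) = 1 := by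
    intro i
    have hsub : Xs i ⊆ f ⁻¹' (Xs i) := fun x hx => hinv i ⟨x, hx, rfl⟩
    have hiter : ∀ (k : ℕ) (y : X), y ∈ Xs i → f^[k] y ∈ Xs i := by
      intro k
      induction k with
      | zero => simp
      | succ k ih =>
        intro y hy
        rw [Function.iterate_succ_apply']
        exact hsub (ih y hy)
    set B : Set X := ⋃ n : ℕ, f^[n] ⁻¹' (Xs i) with hB
    have hBm : MeasurableSet B :=
      MeasurableSet.iUnion fun n =>
        ((hcomp i).isClosed.measurableSet).preimage (hf.iterate n).measurable
    have hBinv : f ⁻¹' B = B := by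
      apply Subset.antisymm
      · intro x hx
        obtain ⟨n, hn⟩ := mem_iUnion.mp hx
        exact mem_iUnion.mpr ⟨n + 1, by
          simpa [Function.iterate_succ_apply] using hn⟩
      · intro x hx
        obtain ⟨n, hn⟩ := mem_iUnion.mp hx
        refine mem_iUnion.mpr ⟨n, ?_⟩
        simp only [mem_preimage] at hn ⊢
        rw [← Function.iterate_succ_apply, Function.iterate_succ_apply']
        exact hsub hn
    have hmono : Monotone fun n : ℕ => f^[n] ⁻¹' (Xs i) := by
      intro a b hab x hx
      simp only [mem_preimage] at hx ⊢
      have : f^[b] x = f^[b - a] (f^[a] x) := by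
        rw [← Function.iterate_add_apply, Nat.sub_add_cancel hab]
      rw [this]
      exact hiter _ _ hx
    have hμB : μ B = μ (Xs i) := by
      rw [hB, (Monotone.directed_le hmono).measure_iUnion]
      have hpre : ∀ n : ℕ, μ (f^[n] ⁻¹' (Xs i)) = μ (Xs i) := fun n =>
        (hmp.iterate n).measure_preimage (hcomp i).isClosed.measurableSet.nullMeasurableSet
      simp [hpre]
    rcases hμ.measure_self_or_compl_eq_zero hBm hBinv with h | h
    · left
      exact measure_mono_null (fun x hx => mem_iUnion.mpr ⟨0, hx⟩) h
    · right
      rw [← hμB]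
      exact (prob_compl_eq_zero_iff hBm).mp h
  by_contra hcon
  push_neg at hcon
  have hz : ∀ i, μ (Xs i) = 0 := fun i => (h01 i).resolve_right (hcon i)
  have : μ (⋃ i, Xs i) = 0 := measure_iUnion_null hz
  rw [hu] at this
  exact one_ne_zero this
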